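/- Let the filtration (𝓕_n)_{n∈ℕ} on (Ω, 𝓕) satisfy condition A, let the mutually equivalent probability measures P₁, …, P_k satisfy condition B with distinguished index i₀, and let M = {Σ_{i=1}^k α_i P_i : α_i ≥ 0, Σ α_i = 1}. Let ξ be a nonnegative random variable integrable with respect to each P_i such that E^{P_i} ξ = M₀ for all i = 1, …, k. Then the process (M_m)_{m∈ℕ} defined by M_m = max_{1≤i≤k} E^{P_i}[ξ | 𝓕_m] is a martingale relative to M: for every Q ∈ M and every m ≥ 1, E^Q[M_m | 𝓕_{m−1}] = M_{m−1} a.s., and E^Q M_m = M₀ for all m. -/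

import Mathlib

open MeasureTheory Filter Set
open scoped ENNReal

/-- **Condition A** of the paper. -/
structure CondA {Ω : Type*} (m0 : MeasurableSpace Ω) (ℱ : MeasureTheory.Filtration ℕ m0)
    (A : ℕ → ℕ → Set Ω) (I : ℕ → ℕ → Set ℕ) : Prop where
  gen_top : (⨆ n, (ℱ n : MeasurableSpace Ω)) = m0
  gen : ∀ n, (ℱ n : MeasurableSpace Ω) = MeasurableSpace.generateFrom (Set.range (A n))
  disj : ∀ n, Pairwise (Function.onFun Disjoint (A n))
  cover : ∀ n, (⋃ s, A n s) = Set.univ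
  idisj : ∀ n, Pairwise (Function.onFun Disjoint (I n))
  icover : ∀ n, (⋃ s, I n s) = Set.univ
  refines : ∀ n s, A n s = ⋃ j ∈ I n s, A (n + 1) j

/-- **Condition B** of the paper, with distinguished index `i₀`. -/
structure CondB {Ω : Type*} {m0 : MeasurableSpace Ω} {k : ℕ}
    (P : Fin (k + 1) → MeasureTheory.Measure Ω)
    (A : ℕ → ℕ → Set Ω) (I : ℕ → ℕ → Set ℕ) (i₀ : Fin (k + 1)) : Prop where
  pos : ∀ n s, 0 < P 0 (A n s)
  dom : ∀ (i : Fin (k + 1)) (n s j : ℕ), j ∈ I n s →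
    (P i (A (n + 1) j)).toReal / (P i (A n s)).toReal ≤
    (P i₀ (A (n + 1) j)).toReal / (P i₀ (A n s)).toReal

/-- The convex set of measures generated by the finite family `P`. -/
def mixSet {Ω : Type*} {m0 : MeasurableSpace Ω} {k : ℕ} (P : Fin (k + 1) → MeasureTheory.Measure Ω) :
    Set (MeasureTheory.Measure Ω) :=
  {Q | ∃ α : Fin (k + 1) → ℝ, (∀ i, 0 ≤ α i) ∧ (∑ i, α i = 1) ∧
    Q = ∑ i, (ENNReal.ofReal (α i)) • P i}

open scoped NNReal
set_option maxHeartbeats 1000000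

open scoped NNReal
set_option maxHeartbeats 1000000

private lemma aux_eq_of_tsum_eq {ι : Type*} {u v : ι → ℝ} (hle : ∀ j, u j ≤ v j)
    (hu : Summable u) (hv : Summable v) (h : ∑' j, u j = ∑' j, v j) (j : ι) : u j = v j := by
  by_contra hne
  exact absurd h (ne_of_lt (Summable.tsum_lt_tsum hle (lt_of_le_of_ne (hle j) hne) hu hv))

private lemma condexp_withDensity_ae_eq {Ω : Type*} {m m0 : MeasurableSpace Ω}
    (hm : m ≤ m0) (μ : Measure Ω) [IsFiniteMeasure μ]
    (g : Ω → ℝ≥0) (hg : Measurable[m] g)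
    [IsFiniteMeasure (μ.withDensity fun ω => (g ω : ℝ≥0∞))]
    {ξ : Ω → ℝ} (hξν : Integrable ξ (μ.withDensity fun ω => (g ω : ℝ≥0∞)))
    (hξμ : Integrable ξ μ) :
    (μ.withDensity fun ω => (g ω : ℝ≥0∞))[ξ|m]
      =ᵐ[μ.withDensity fun ω => (g ω : ℝ≥0∞)] μ[ξ|m] := by
  have hg0 : Measurable[m0] g := hg.mono hm le_rfl
  have hG : StronglyMeasurable[m] (fun ω => (g ω : ℝ)) :=
    (measurable_coe_nnreal_real.comp hg).stronglyMeasurable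
  have hmulint : Integrable ((fun ω => (g ω : ℝ)) * ξ) μ := by
    have h1 := (integrable_withDensity_iff_integrable_smul hg0).mp hξν
    simpa [Pi.mul_def, NNReal.smul_def, smul_eq_mul] using h1
  have hmul : μ[(fun ω => (g ω : ℝ)) * ξ|m] =ᵐ[μ] (fun ω => (g ω : ℝ)) * μ[ξ|m] :=
    condExp_mul_of_stronglyMeasurable_left hG hmulint hξμ
  have hint2 : Integrable ((fun ω => (g ω : ℝ)) * μ[ξ|m]) μ :=
    integrable_condExp.congr hmul
  have hcint : Integrable (μ[ξ|m]) (μ.withDensity fun ω => (g ω : ℝ≥0∞)) := by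
    rw [integrable_withDensity_iff_integrable_smul hg0]
    simpa [Pi.mul_def, NNReal.smul_def, smul_eq_mul] using hint2
  refine (ae_eq_condExp_of_forall_setIntegral_eq hm hξν
    (fun s _ _ => hcint.integrableOn)
    (fun s hs hνs => ?_)
    (stronglyMeasurable_condExp.aestronglyMeasurable)).symm
  have hsm : MeasurableSet s := hm s hs
  show ∫ x, (μ[ξ|m]) x ∂((μ.withDensity fun ω => (g ω : ℝ≥0∞)).restrict s)
      = ∫ x, ξ x ∂((μ.withDensity fun ω => (g ω : ℝ≥0∞)).restrict s)
  rw [restrict_withDensity hsm, integral_withDensity_eq_integral_smul hg0,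
    integral_withDensity_eq_integral_smul hg0]
  calc ∫ x, g x • (μ[ξ|m]) x ∂(μ.restrict s)
      = ∫ x in s, (μ[(fun ω => (g ω : ℝ)) * ξ|m]) x ∂μ := by
        refine integral_congr_ae (ae_restrict_of_ae ?_)
        filter_upwards [hmul] with x hx
        simp [NNReal.smul_def, hx]
    _ = ∫ x in s, ((fun ω => (g ω : ℝ)) * ξ) x ∂μ := setIntegral_condExp hm hmulint hs
    _ = ∫ x, g x • ξ x ∂(μ.restrict s) := by
        refine integral_congr_ae (ae_restrict_of_ae (ae_of_all _ fun x => ?_))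
        simp [NNReal.smul_def]

/-- **Lemma `1q5` of the paper.**
Under conditions A and B, if `ξ ≥ 0` is integrable with respect to each `P i` and
`E^{P i} ξ = M₀` for all `i`, then `M m = max_i E^{P i}[ξ | ℱ m]` is a martingale
relative to the convex hull `M` of the `P i` : for every `Q ∈ M` and `m ≥ 1`,
`E^Q[M m | ℱ (m-1)] = M (m-1)` a.s., and `E^Q (M m) = M₀` for all `m`. -/
theorem stmt14 {Ω : Type*} {m0 : MeasurableSpace Ω}
    (ℱ : Filtration ℕ m0) (A : ℕ → ℕ → Set Ω) (I : ℕ → ℕ → Set ℕ)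
    (hA : CondA m0 ℱ A I)
    (k : ℕ) (P : Fin (k + 1) → Measure Ω)
    (hP_prob : ∀ i, IsProbabilityMeasure (P i))
    (hP_equiv : ∀ i j, P i ≪ P j)
    (i₀ : Fin (k + 1)) (hB : CondB P A I i₀)
    (ξ : Ω → ℝ) (hξ_nonneg : ∀ ω, 0 ≤ ξ ω) (hξ_int : ∀ i, Integrable ξ (P i))
    (M₀ : ℝ) (hM₀ : ∀ i, ∫ ω, ξ ω ∂(P i) = M₀) :
    (∀ Q ∈ mixSet P, ∀ m : ℕ,
      (Q[(fun ω => ⨆ i : Fin (k + 1), ((P i)[ξ | ℱ (m + 1)]) ω) | ℱ m]) =ᵐ[Q]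
      fun ω => ⨆ i : Fin (k + 1), ((P i)[ξ | ℱ m]) ω) ∧
    (∀ Q ∈ mixSet P, ∀ m : ℕ,
      ∫ ω, (⨆ i : Fin (k + 1), ((P i)[ξ | ℱ m]) ω) ∂Q = M₀) := by
  classical
  -- atoms are measurable
  have hAm : ∀ n s, MeasurableSet[ℱ n] (A n s) := fun n s => by
    rw [hA.gen n]; exact MeasurableSpace.measurableSet_generateFrom (mem_range_self s)
  have hAm0 : ∀ n s, MeasurableSet (A n s) := fun n s => ℱ.le n _ (hAm n s)
  -- positivity and finiteness
  have hfin : ∀ i n s, P i (A n s) ≠ ∞ := fun i n s => by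
    haveI := hP_prob i; exact measure_ne_top _ _
  have hpos : ∀ i n s, 0 < P i (A n s) := by
    intro i n s
    rcases eq_or_ne (P i (A n s)) 0 with h | h
    · exact absurd (hP_equiv 0 i h) (hB.pos n s).ne'
    · exact pos_iff_ne_zero.mpr h
  have htR : ∀ i n s, 0 < (P i (A n s)).toReal :=
    fun i n s => ENNReal.toReal_pos (hpos i n s).ne' (hfin i n s)
  -- refinement subset
  have hsub : ∀ n s j, j ∈ I n s → A (n + 1) j ⊆ A n s := by
    intro n s j hj
    rw [hA.refines n s]
    exact subset_biUnion_of_mem hj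
  -- decomposition of measure of an atom
  have hsum : ∀ i n s, P i (A n s) = ∑' j : I n s, P i (A (n + 1) (j : ℕ)) := by
    intro i n s
    have h1 : A n s = ⋃ j : I n s, A (n + 1) (j : ℕ) := by
      rw [hA.refines n s, iUnion_coe_set]
    rw [h1]
    exact measure_iUnion
      (fun j j' hne => hA.disj (n + 1) (Subtype.coe_ne_coe.mpr hne))
      (fun j => hAm0 (n + 1) (j : ℕ))
  -- summability of atom measures (in ℝ)
  have hsummable : ∀ i n s, Summable (fun j : I n s => (P i (A (n + 1) (j : ℕ))).toReal) := by
    intro i n s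
    exact ENNReal.summable_toReal (by rw [← hsum i n s]; exact hfin i n s)
  have htsum : ∀ i n s,
      ∑' j : I n s, (P i (A (n + 1) (j : ℕ))).toReal = (P i (A n s)).toReal := by
    intro i n s
    rw [hsum i n s, ENNReal.tsum_toReal_eq (fun j => hfin i (n + 1) _)]
  -- condition B forces equality of the one-step ratios
  have hratio : ∀ i n s j, j ∈ I n s →
      (P i (A (n + 1) j)).toReal / (P i (A n s)).toReal
        = (P i₀ (A (n + 1) j)).toReal / (P i₀ (A n s)).toReal := by
    intro i n s j hj
    have h := aux_eq_of_tsum_eq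
      (u := fun j : I n s => (P i (A (n + 1) (j : ℕ))).toReal / (P i (A n s)).toReal)
      (v := fun j : I n s => (P i₀ (A (n + 1) (j : ℕ))).toReal / (P i₀ (A n s)).toReal)
      (fun j => hB.dom i n s (j : ℕ) j.2)
      ((hsummable i n s).div_const _) ((hsummable i₀ n s).div_const _)
      (by rw [tsum_div_const, tsum_div_const, htsum i n s, htsum i₀ n s,
        div_self (htR i n s).ne', div_self (htR i₀ n s).ne']) ⟨j, hj⟩
    exact h
  -- the density ratio is constant along refinement chains
  have hlevel : ∀ n j, ∃ s, A n j ⊆ A 0 s ∧ ∀ i,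
      (P i (A n j)).toReal
        = (P i (A 0 s)).toReal / (P i₀ (A 0 s)).toReal * (P i₀ (A n j)).toReal := by
    intro n
    induction n with
    | zero =>
      intro j
      exact ⟨j, subset_rfl, fun i => (div_mul_cancel₀ _ (htR i₀ 0 j).ne').symm⟩
    | succ n ih =>
      intro j
      have hj : ∃ s', j ∈ I n s' := by
        have : j ∈ ⋃ s', I n s' := by rw [hA.icover n]; trivial
        exact mem_iUnion.mp this
      obtain ⟨s', hjs'⟩ := hj
      obtain ⟨s, hsub0, hc⟩ := ih s'
      refine ⟨s, (hsub n s' j hjs').trans hsub0, fun i => ?_⟩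
      have h1 : (P i (A (n + 1) j)).toReal
          = (P i (A (n + 1) j)).toReal / (P i (A n s')).toReal * (P i (A n s')).toReal :=
        (div_mul_cancel₀ _ (htR i n s').ne').symm
      rw [h1, hratio i n s' j hjs', hc i]
      have h2 := (htR i₀ n s').ne'
      have h3 := (htR i₀ 0 s).ne'
      field_simp
  -- the level-0 atom containing a point
  have hex : ∀ ω : Ω, ∃ s, ω ∈ A 0 s := fun ω =>
    mem_iUnion.mp (by rw [hA.cover 0]; trivial)
  choose σ hσ using hex
  have hσ_eq : ∀ ω s, ω ∈ A 0 s → σ ω = s := by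
    intro ω s h
    by_contra hne
    exact Set.disjoint_left.mp (hA.disj 0 hne) (hσ ω) h
  have hσ_meas : Measurable[ℱ 0] σ := by
    intro t _
    have hpre : σ ⁻¹' t = ⋃ s ∈ t, A 0 s := by
      ext ω
      simp only [mem_preimage, mem_iUnion, exists_prop]
      constructor
      · intro h; exact ⟨σ ω, h, hσ ω⟩
      · rintro ⟨s, hst, hωs⟩; rw [hσ_eq ω s hωs]; exact hst
    rw [hpre]
    exact MeasurableSet.biUnion (to_countable t) fun s _ => hAm 0 s
  -- the densities
  set c : Fin (k + 1) → ℕ → ℝ :=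
    fun i s => (P i (A 0 s)).toReal / (P i₀ (A 0 s)).toReal with hc_def
  set g : Fin (k + 1) → Ω → ℝ≥0 := fun i ω => Real.toNNReal (c i (σ ω)) with hg_def
  have hg_meas : ∀ i, Measurable[ℱ 0] (g i) := fun i =>
    (measurable_from_top (f := fun s : ℕ => Real.toNNReal (c i s))).comp hσ_meas
  have hg_measM : ∀ (m : ℕ) i, Measurable[ℱ m] (g i) := fun m i =>
    (hg_meas i).mono (ℱ.mono (Nat.zero_le m)) le_rfl
  have hg_meas0 : ∀ i, Measurable[m0] (g i) := fun i =>
    (hg_meas i).mono (ℱ.le 0) le_rfl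
  -- value of the candidate density measure on atoms
  have hatom : ∀ i n j,
      (P i₀).withDensity (fun ω => (g i ω : ℝ≥0∞)) (A n j) = P i (A n j) := by
    intro i n j
    obtain ⟨s, hsub0, hval⟩ := hlevel n j
    rw [withDensity_apply _ (hAm0 n j)]
    have hconst : ∀ ω ∈ A n j, ((g i ω : ℝ≥0∞)) = ENNReal.ofReal (c i s) := by
      intro ω hω
      have : σ ω = s := hσ_eq ω s (hsub0 hω)
      simp only [hg_def, this]
      rfl
    rw [setLIntegral_congr_fun (hAm0 n j) hconst, setLIntegral_const]
    have hc_nonneg : 0 ≤ c i s := div_nonneg ENNReal.toReal_nonneg ENNReal.toReal_nonneg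
    rw [← ENNReal.ofReal_toReal (hfin i₀ n j), ← ENNReal.ofReal_mul hc_nonneg,
      ← hval i, ENNReal.ofReal_toReal (hfin i n j)]
  -- P i has density g i with respect to P i₀
  have hdens : ∀ i, P i = (P i₀).withDensity (fun ω => (g i ω : ℝ≥0∞)) := by
    intro i
    haveI := hP_prob i
    -- the atoms generate m0
    have hgen : m0 = MeasurableSpace.generateFrom (⋃ n, Set.range (A n)) := by
      rw [← hA.gen_top]
      simp_rw [hA.gen]
      exact MeasurableSpace.iSup_generateFrom _
    -- chains
    have hchain : ∀ m n, m ≤ n → ∀ j, ∃ s, A n j ⊆ A m s := by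
      intro m n hmn
      induction n, hmn using Nat.le_induction with
      | base => exact fun j => ⟨j, subset_rfl⟩
      | succ n hmn ih =>
        intro j
        have : j ∈ ⋃ s', I n s' := by rw [hA.icover n]; trivial
        obtain ⟨s', hjs'⟩ := mem_iUnion.mp this
        obtain ⟨s, hs⟩ := ih s'
        exact ⟨s, (hsub n s' j hjs').trans hs⟩
    have hpi : IsPiSystem (⋃ n, Set.range (A n)) := by
      have key : ∀ n n' s s', n ≤ n' → (A n s ∩ A n' s').Nonempty →
          A n s ∩ A n' s' ∈ ⋃ n, Set.range (A n) := by
        intro n n' s s' hnn' hne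
        obtain ⟨t, ht⟩ := hchain n n' hnn' s'
        have hts : t = s := by
          by_contra hts
          obtain ⟨ω, hω1, hω2⟩ := hne
          exact Set.disjoint_left.mp (hA.disj n hts) (ht hω2) hω1
        have : A n s ∩ A n' s' = A n' s' := by
          apply inter_eq_self_of_subset_right
          rw [← hts]; exact ht
        rw [this]
        exact mem_iUnion.mpr ⟨n', mem_range_self s'⟩
      intro t ht t' ht' hne
      simp only [mem_iUnion, mem_range] at ht ht'
      obtain ⟨n, s, rfl⟩ := ht
      obtain ⟨n', s', rfl⟩ := ht'
      rcases le_total n n' with h | h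
      · exact key n n' s s' h hne
      · rw [inter_comm] at hne ⊢
        exact key n' n s' s h hne
    refine ext_of_generate_finite _ hgen hpi ?_ ?_
    · intro t ht
      simp only [mem_iUnion, mem_range] at ht
      obtain ⟨n, s, rfl⟩ := ht
      exact (hatom i n s).symm
    · have hcover : (univ : Set Ω) = ⋃ s, A 0 s := (hA.cover 0).symm
      rw [hcover,
        measure_iUnion (fun s s' hne => hA.disj 0 hne) (fun s => hAm0 0 s),
        measure_iUnion (fun s s' hne => hA.disj 0 hne) (fun s => hAm0 0 s)]
      congr 1
      ext s
      exact (hatom i 0 s).symm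
  -- conditional expectations agree
  have hcexp : ∀ i (n : ℕ), (P i)[ξ|ℱ n] =ᵐ[P i] (P i₀)[ξ|ℱ n] := by
    intro i n
    haveI := hP_prob i
    haveI := hP_prob i₀
    haveI : IsFiniteMeasure ((P i₀).withDensity fun ω => (g i ω : ℝ≥0∞)) := by
      rw [← hdens i]; infer_instance
    have h := condexp_withDensity_ae_eq (ℱ.le n) (P i₀) (g i) (hg_measM n i)
      (ξ := ξ) (by rw [← hdens i]; exact hξ_int i) (hξ_int i₀)
    rw [← hdens i] at h
    exact h
  -- `(P i₀)[ξ|ℱ n]` is integrable with respect to every `P i`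
  have key_int : ∀ (n : ℕ) i, Integrable ((P i₀)[ξ|ℱ n]) (P i) := by
    intro n i
    haveI := hP_prob i
    haveI := hP_prob i₀
    have hG : StronglyMeasurable[ℱ n] (fun ω => (g i ω : ℝ)) :=
      (measurable_coe_nnreal_real.comp (hg_measM n i)).stronglyMeasurable
    have hmulint : Integrable ((fun ω => (g i ω : ℝ)) * ξ) (P i₀) := by
      have h1 := (integrable_withDensity_iff_integrable_smul (hg_meas0 i)).mp
        (by rw [← hdens i]; exact hξ_int i)
      simpa [Pi.mul_def, NNReal.smul_def, smul_eq_mul] using h1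
    have hmul := condExp_mul_of_stronglyMeasurable_left (m := ℱ n) hG hmulint (hξ_int i₀)
    have h2 : Integrable ((fun ω => (g i ω : ℝ)) * (P i₀)[ξ|ℱ n]) (P i₀) :=
      integrable_condExp.congr hmul
    rw [hdens i, integrable_withDensity_iff_integrable_smul (hg_meas0 i)]
    simpa [Pi.mul_def, NNReal.smul_def, smul_eq_mul] using h2
  -- the sup collapses
  have esup : ∀ n : ℕ,
      (fun ω => ⨆ i : Fin (k + 1), ((P i)[ξ|ℱ n]) ω) =ᵐ[P i₀] (P i₀)[ξ|ℱ n] := by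
    intro n
    have hall : ∀ᵐ ω ∂(P i₀), ∀ i, ((P i)[ξ|ℱ n]) ω = ((P i₀)[ξ|ℱ n]) ω :=
      ae_all_iff.mpr fun i => (hcexp i n).filter_mono (hP_equiv i₀ i).ae_le
    filter_upwards [hall] with ω hω
    simp only [hω, ciSup_const]
  -- process each mixture
  have hQfacts : ∀ Q ∈ mixSet P,
      (Q ≪ P i₀) ∧ IsProbabilityMeasure Q ∧
      (∀ n : ℕ, Integrable ((P i₀)[ξ|ℱ n]) Q) ∧
      (∀ n : ℕ, Q[(P i₀)[ξ|ℱ (n + 1)]|ℱ n] =ᵐ[Q] (P i₀)[(P i₀)[ξ|ℱ (n + 1)]|ℱ n]) := by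
    rintro Q ⟨α, hα0, hα1, rfl⟩
    haveI := hP_prob i₀
    have hQac : (∑ i, ENNReal.ofReal (α i) • P i) ≪ P i₀ := by
      intro t ht
      rw [Measure.finset_sum_apply]
      refine Finset.sum_eq_zero fun i _ => ?_
      rw [Measure.smul_apply, hP_equiv i i₀ ht, smul_zero]
    have hQuniv : (∑ i, ENNReal.ofReal (α i) • P i) univ = 1 := by
      rw [Measure.finset_sum_apply]
      have : ∀ i : Fin (k + 1), (ENNReal.ofReal (α i) • P i) univ = ENNReal.ofReal (α i) := by
        intro i
        haveI := hP_prob i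
        rw [Measure.smul_apply, measure_univ, smul_eq_mul, mul_one]
      rw [Finset.sum_congr rfl fun i _ => this i,
        ← ENNReal.ofReal_sum_of_nonneg fun i _ => hα0 i, hα1, ENNReal.ofReal_one]
    haveI hQprob : IsProbabilityMeasure (∑ i, ENNReal.ofReal (α i) • P i) := ⟨hQuniv⟩
    have hint : ∀ n : ℕ, Integrable ((P i₀)[ξ|ℱ n]) (∑ i, ENNReal.ofReal (α i) • P i) :=
      fun n => integrable_finset_sum_measure.mpr fun i _ =>
        (key_int n i).smul_measure ENNReal.ofReal_ne_top
    refine ⟨hQac, hQprob, hint, fun n => ?_⟩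
    -- the mixture has an `ℱ 0`-measurable density as well
    set gQ : Ω → ℝ≥0 := fun ω => ∑ i, (α i).toNNReal * g i ω with hgQ_def
    have hgQmeas : ∀ m : ℕ, Measurable[ℱ m] gQ := fun m =>
      Finset.measurable_sum _ fun i _ => ((hg_measM m i).const_mul _)
    have hQd : (P i₀).withDensity (fun ω => (gQ ω : ℝ≥0∞))
        = ∑ i, ENNReal.ofReal (α i) • P i := by
      have hstep : ∀ t : Finset (Fin (k + 1)),
          (P i₀).withDensity (fun ω => ((∑ i ∈ t, (α i).toNNReal * g i ω : ℝ≥0) : ℝ≥0∞))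
            = ∑ i ∈ t, ENNReal.ofReal (α i) • P i := by
        intro t
        induction t using Finset.induction with
        | empty => simp
        | insert a t' hnotmem ih =>
          have hfun : (fun ω => ((∑ i ∈ insert a t', (α i).toNNReal * g i ω : ℝ≥0) : ℝ≥0∞))
              = (fun ω => (((α a).toNNReal : ℝ≥0∞)) * (g a ω : ℝ≥0∞))
                + (fun ω => ((∑ i ∈ t', (α i).toNNReal * g i ω : ℝ≥0) : ℝ≥0∞)) := by
            funext ω
            rw [Finset.sum_insert hnotmem]
            push_cast
            rfl
          rw [hfun, withDensity_add_left ((hg_meas0 a).coe_nnreal_ennreal.const_mul _),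
            ih, Finset.sum_insert hnotmem]
          congr 1
          have : (fun ω => (((α a).toNNReal : ℝ≥0∞)) * (g a ω : ℝ≥0∞))
              = ((α a).toNNReal : ℝ≥0∞) • (fun ω => (g a ω : ℝ≥0∞)) := rfl
          rw [this, withDensity_smul _ (hg_meas0 a).coe_nnreal_ennreal, ← hdens a]
          rfl
      exact hstep Finset.univ
    haveI : IsFiniteMeasure ((P i₀).withDensity fun ω => (gQ ω : ℝ≥0∞)) := by
      rw [hQd]; infer_instance
    have h := condexp_withDensity_ae_eq (ℱ.le n) (P i₀) gQ (hgQmeas n)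
      (ξ := (P i₀)[ξ|ℱ (n + 1)]) (by rw [hQd]; exact hint (n + 1)) integrable_condExp
    rw [hQd] at h
    exact h
  constructor
  · intro Q hQ m
    obtain ⟨hQac, hQprob, hQint, hQce⟩ := hQfacts Q hQ
    haveI := hP_prob i₀
    haveI := hQprob
    have htransQ : ∀ {f h : Ω → ℝ}, f =ᵐ[P i₀] h → f =ᵐ[Q] h :=
      fun hfh => hfh.filter_mono hQac.ae_le
    refine (condExp_congr_ae (htransQ (esup (m + 1)))).trans ?_
    refine (hQce m).trans ?_
    refine (htransQ (condExp_condExp_of_le (ℱ.mono (Nat.le_succ m)) (ℱ.le (m + 1)))).trans ?_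
    exact htransQ (esup m).symm
  · intro Q hQ m
    obtain ⟨hQac, hQprob, hQint, hQce⟩ := hQfacts Q hQ
    haveI := hP_prob i₀
    haveI := hQprob
    have htransQ : ∀ {f h : Ω → ℝ}, f =ᵐ[P i₀] h → f =ᵐ[Q] h :=
      fun hfh => hfh.filter_mono hQac.ae_le
    rw [integral_congr_ae (htransQ (esup m))]
    obtain ⟨α, hα0, hα1, rfl⟩ := hQ
    rw [integral_finset_sum_measure fun i _ =>
      (key_int m i).smul_measure ENNReal.ofReal_ne_top]
    have hterm : ∀ i : Fin (k + 1),
        ∫ ω, ((P i₀)[ξ|ℱ m]) ω ∂(ENNReal.ofReal (α i) • P i) = α i * M₀ := by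
      intro i
      haveI := hP_prob i
      rw [integral_smul_measure, ENNReal.toReal_ofReal (hα0 i), smul_eq_mul]
      congr 1
      rw [← integral_congr_ae (hcexp i m), integral_condExp (ℱ.le m), hM₀ i]
    rw [Finset.sum_congr rfl fun i _ => hterm i, ← Finset.sum_mul, hα1, one_mul]
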